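/- Let G be a 2-connected finite graph, A↑ a fragment of G, and let V↑ be the vertex set of a collection of vertex-disjoint paths Q↑_1,...,Q↑_m in ⟨A↑ ∪ S⟩ with terminal vertices in S, each of at least 2 vertices, maximizing the total number of vertices (condition (*1)). If A↑ − V↑ is a nonempty independent set, then |V↑| ≥ 2δ + m − 2. -/

import Mathlib

open SimpleGraph

variable {V : Type*}

/-- The neighborhood `N(X)`: vertices outside `X` having a neighbor in `X`. -/
def nbhd (G : SimpleGraph V) (X : Set V) : Set V :=
  {v | v ∉ X ∧ ∃ x ∈ X, G.Adj v x}

/-- `S` is a cut-set: removing `S` leaves a disconnected or trivial graph. -/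
def IsCutSet (G : SimpleGraph V) (S : Set V) : Prop :=
  ¬ (G.induce Sᶜ).Connected ∨ Sᶜ.Subsingleton

/-- The connectivity `κ` of `G`. -/
noncomputable def kappa (G : SimpleGraph V) : ℕ :=
  sInf {k | ∃ S : Set V, S.ncard = k ∧ IsCutSet G S}

/-- `A` is a fragment of `G`: `N(A)` is a minimum cut-set and the complement
`Â = V - (A ∪ N(A))` is nonempty. -/
def IsFragment (G : SimpleGraph V) (A : Set V) : Prop :=
  IsCutSet G (nbhd G A) ∧ (nbhd G A).ncard = kappa G ∧ (A ∪ nbhd G A)ᶜ.Nonempty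

/-- An endfragment: a fragment containing no other fragment as a proper subset. -/
def IsEndfragment (G : SimpleGraph V) (A : Set V) : Prop :=
  IsFragment G A ∧ ∀ B ⊂ A, ¬ IsFragment G B

/-- A system of vertex-disjoint paths of at least two vertices each, lying in
`⟨A ∪ S⟩` with both terminal vertices in `S` (the setting of condition (*1)). -/
def IsUpSystem (G : SimpleGraph V) (A S : Set V) {m : ℕ}
    (Q : Fin m → Σ u v : V, G.Walk u v) : Prop :=
  (∀ i, (Q i).2.2.IsPath) ∧
  (∀ i, (Q i).1 ∈ S ∧ (Q i).2.1 ∈ S) ∧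
  (∀ i, 2 ≤ (Q i).2.2.support.length) ∧
  (∀ i, ∀ v ∈ (Q i).2.2.support, v ∈ A ∪ S) ∧
  (∀ i j, i ≠ j → (Q i).2.2.support.Disjoint (Q j).2.2.support)

/-- A system of vertex-disjoint paths lying in `⟨A ∪ S⟩` (the setting of the
paths `Q↓ᵢ` of Definition B). -/
def IsDownSystem (G : SimpleGraph V) (A S : Set V) {m : ℕ}
    (Q : Fin m → Σ u v : V, G.Walk u v) : Prop :=
  (∀ i, (Q i).2.2.IsPath) ∧
  (∀ i, ∀ v ∈ (Q i).2.2.support, v ∈ A ∪ S) ∧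
  (∀ i j, i ≠ j → (Q i).2.2.support.Disjoint (Q j).2.2.support)

/-- The total vertex set of a path system. -/
def systemVerts (G : SimpleGraph V) {m : ℕ}
    (Q : Fin m → Σ u v : V, G.Walk u v) : Set V :=
  ⋃ i, {v | v ∈ (Q i).2.2.support}

/-- The total number of vertices of a path system. -/
def systemSize (G : SimpleGraph V) {m : ℕ}
    (Q : Fin m → Σ u v : V, G.Walk u v) : ℕ :=
  ∑ i, (Q i).2.2.support.length

/-- The paths `Qu i` and `Qd i` combine into the simple cycle `C`: the edges of
`C` are precisely the edges of all these paths. -/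
def Combines (G : SimpleGraph V) {m : ℕ}
    (Qu Qd : Fin m → Σ u v : V, G.Walk u v) {x : V} (C : G.Walk x x) : Prop :=
  C.IsCycle ∧
    {e | e ∈ C.edges} =
      (⋃ i, {e | e ∈ (Qu i).2.2.edges}) ∪ ⋃ i, {e | e ∈ (Qd i).2.2.edges}

/-- if, in a 2-connected graph, the maximal path system `Q↑` of a
fragment `A↑` (condition (*1)) leaves a nonempty independent set `A↑ - V↑`
uncovered, then `|V↑| ≥ 2δ + m - 2`. -/

lemma filter_chain_bound (P : V → Bool) :
    ∀ (t : List V) (x : V), List.Chain' (fun p q => ¬(P p = true ∧ P q = true)) (x :: t) →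
      2 * ((x :: t).filter P).length + 1 ≤
        (x :: t).length + (if P x then 1 else 0) +
          (if P ((x :: t).getLast (List.cons_ne_nil x t)) then 1 else 0) := by
  intro t
  induction t with
  | nil =>
    intro x _
    by_cases h : P x <;> simp [List.filter, h]
  | cons y t' ih =>
    intro x hc
    simp only [List.Chain', List.isChain_cons_cons] at hc
    obtain ⟨hxy, hc'⟩ := hc
    have hlast : (x :: y :: t').getLast (List.cons_ne_nil _ _)
        = (y :: t').getLast (List.cons_ne_nil _ _) := by
      simp [List.getLast_cons]
    have IH := ih y hc'
    rw [hlast]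
    by_cases hx : P x = true
    · have hy : P y = false := by
        cases h : P y
        · rfl
        · exact absurd ⟨hx, h⟩ hxy
      rw [List.filter_cons_of_pos hx, List.filter_cons_of_neg (by simp [hy])]
      rw [List.filter_cons_of_neg (by simp [hy]), hy] at IH
      simp only [List.length_cons, if_pos hx, if_neg (by simp : ¬ (false = true))] at *
      omega
    · rw [List.filter_cons_of_neg (by simp [hx])]
      have hyle : (if P y = true then (1:ℕ) else 0) ≤ 1 := by split <;> omega
      simp only [List.length_cons, if_neg hx] at *
      omega

lemma chain'_of_edges {G : SimpleGraph V} (P : V → Bool) :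
    ∀ {u v : V} (w : G.Walk u v),
      (∀ x y : V, s(x,y) ∈ w.edges → ¬(P x = true ∧ P y = true)) →
      List.Chain' (fun p q => ¬(P p = true ∧ P q = true)) w.support := by
  intro u v w
  induction w with
  | nil => intro _; simp [List.Chain']
  | @cons u b v h p ih =>
    intro he
    rw [Walk.support_cons]
    simp only [List.Chain', List.isChain_cons]
    constructor
    · intro z hz
      rw [p.support_eq_cons] at hz
      simp only [List.head?_cons, Option.mem_def, Option.some.injEq] at hz
      subst hz
      exact he u b (by simp [Walk.edges_cons])
    · exact ih (fun x y hxy => he x y (by simp [Walk.edges_cons, hxy]))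

lemma insert_vertex {G : SimpleGraph V} {a : V} :
    ∀ {u v : V} (w : G.Walk u v), w.IsPath → a ∉ w.support →
      ∀ {x y : V}, s(x,y) ∈ w.edges → G.Adj a x → G.Adj a y →
      ∃ w' : G.Walk u v, w'.IsPath ∧ w'.support.Perm (a :: w.support) := by
  intro u v w
  induction w with
  | nil => intro _ _ x y he; simp at he
  | @cons u b v h p ih =>
    intro hpath ha x y he hax hay
    have hp : p.IsPath := hpath.of_cons
    have hu : u ∉ p.support := (Walk.cons_isPath_iff h p).mp hpath |>.2
    rw [Walk.support_cons, List.mem_cons] at ha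
    push_neg at ha
    obtain ⟨hau, hap⟩ := ha
    rw [Walk.edges_cons, List.mem_cons] at he
    rcases he with he | he
    · -- the edge is the first edge s(u,b)
      have hadj : G.Adj a u ∧ G.Adj a b := by
        rw [Sym2.eq_iff] at he
        rcases he with ⟨rfl, rfl⟩ | ⟨rfl, rfl⟩
        · exact ⟨hax, hay⟩
        · exact ⟨hay, hax⟩
      refine ⟨Walk.cons hadj.1.symm (Walk.cons hadj.2 p), ?_, ?_⟩
      · rw [Walk.cons_isPath_iff, Walk.cons_isPath_iff]
        refine ⟨⟨hp, hap⟩, ?_⟩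
        rw [Walk.support_cons, List.mem_cons]
        push_neg
        exact ⟨fun hh => hau hh.symm, hu⟩
      · simp only [Walk.support_cons]
        exact List.Perm.swap a u _
    · obtain ⟨p', hp', hperm⟩ := ih hp hap he hax hay
      refine ⟨Walk.cons h p', ?_, ?_⟩
      · rw [Walk.cons_isPath_iff]
        refine ⟨hp', fun hmem => ?_⟩
        rw [hperm.mem_iff, List.mem_cons] at hmem
        rcases hmem with rfl | hmem
        · exact hau rfl
        · exact hu hmem
      · rw [Walk.support_cons]
        exact (hperm.cons u).trans (List.Perm.swap a u p.support)

lemma glue_walks {G : SimpleGraph V} {o1 e1 e2 o2 a : V}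
    (w1 : G.Walk o1 e1) (w2 : G.Walk e2 o2)
    (h1 : G.Adj e1 a) (h2 : G.Adj a e2)
    (hn1 : w1.support.Nodup) (hn2 : w2.support.Nodup)
    (hd : w1.support.Disjoint w2.support)
    (ha1 : a ∉ w1.support) (ha2 : a ∉ w2.support) :
    ∃ w' : G.Walk o1 o2, w'.IsPath ∧ w'.support.Perm (a :: (w1.support ++ w2.support)) := by
  refine ⟨w1.append (Walk.cons h1 (Walk.cons h2 w2)), ?_, ?_⟩
  · rw [Walk.isPath_def, Walk.support_append]
    simp only [Walk.support_cons, List.tail_cons]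
    rw [List.nodup_append]
    refine ⟨hn1, ?_, ?_⟩
    · rw [List.nodup_cons]
      exact ⟨ha2, hn2⟩
    · intro z hz y hz2 hzy
      subst hzy
      rw [List.mem_cons] at hz2
      rcases hz2 with rfl | hz2
      · exact ha1 hz
      · exact hd hz hz2
  · rw [Walk.support_append]
    simp only [Walk.support_cons, List.tail_cons]
    exact List.perm_middle
lemma replace_size {G : SimpleGraph V} {A S : Set V} {m : ℕ}
    {Q : Fin m → Σ u v : V, G.Walk u v} (hQ : IsUpSystem G A S Q) (i : Fin m)
    {u' v' : V} (w' : G.Walk u' v') (hp : w'.IsPath) (hu : u' ∈ S) (hv : v' ∈ S)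
    (hlen2 : 2 ≤ w'.support.length)
    (hsub : ∀ x ∈ w'.support, x ∈ A ∪ S)
    (hdisj : ∀ k, k ≠ i → w'.support.Disjoint (Q k).2.2.support)
    (hbig : (Q i).2.2.support.length < w'.support.length) :
    ∃ (m' : ℕ) (Q' : Fin m' → Σ u v : V, G.Walk u v),
      IsUpSystem G A S Q' ∧ systemSize G Q < systemSize G Q' := by
  classical
  set Q' : Fin m → Σ u v : V, G.Walk u v :=
    fun k => if h : k = i then ⟨u', v', w'⟩ else Q k with hQ'def
  have hQ'i : Q' i = ⟨u', v', w'⟩ := by simp [hQ'def]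
  have hQ'k : ∀ k, k ≠ i → Q' k = Q k := by intro k hk; simp [hQ'def, hk]
  refine ⟨m, Q', ⟨?_, ?_, ?_, ?_, ?_⟩, ?_⟩
  · intro k
    by_cases hk : k = i
    · subst hk; rw [hQ'i]; exact hp
    · rw [hQ'k k hk]; exact hQ.1 k
  · intro k
    by_cases hk : k = i
    · subst hk; rw [hQ'i]; exact ⟨hu, hv⟩
    · rw [hQ'k k hk]; exact hQ.2.1 k
  · intro k
    by_cases hk : k = i
    · subst hk; rw [hQ'i]; exact hlen2
    · rw [hQ'k k hk]; exact hQ.2.2.1 k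
  · intro k
    by_cases hk : k = i
    · subst hk; rw [hQ'i]; exact hsub
    · rw [hQ'k k hk]; exact hQ.2.2.2.1 k
  · intro k l hkl
    by_cases hk : k = i
    · have hl : l ≠ i := fun h => hkl (hk.trans h.symm)
      rw [hk, hQ'i, hQ'k l hl]
      exact hdisj l hl
    · by_cases hl : l = i
      · subst hl
        rw [hQ'i, hQ'k k hk]
        intro z hz hz2
        exact hdisj k hk hz2 hz
      · rw [hQ'k k hk, hQ'k l hl]
        exact hQ.2.2.2.2 k l hkl
  · have hfun : (fun k => (Q' k).2.2.support.length)
        = Function.update (fun k => (Q k).2.2.support.length) i w'.support.length := by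
      funext k
      by_cases hk : k = i
      · subst hk; rw [hQ'i, Function.update_self]
      · rw [hQ'k k hk, Function.update_of_ne hk]
    have hsum : ∑ k, (Q' k).2.2.support.length
        = w'.support.length + ∑ k ∈ Finset.univ \ {i}, (Q k).2.2.support.length := by
      rw [Finset.sum_congr rfl (fun k _ => congrFun hfun k),
        Finset.sum_update_of_mem (Finset.mem_univ i)]
    show systemSize G Q < ∑ k, (Q' k).2.2.support.length
    rw [hsum]
    have h2 : systemSize G Q
        = ∑ k ∈ Finset.univ \ {i}, (Q k).2.2.support.length + (Q i).2.2.support.length := by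
      rw [systemSize, Finset.sum_eq_sum_sdiff_singleton_add (Finset.mem_univ i)]
    omega

lemma add_size {G : SimpleGraph V} {A S : Set V} {m : ℕ}
    {Q : Fin m → Σ u v : V, G.Walk u v} (hQ : IsUpSystem G A S Q)
    {u' v' : V} (w' : G.Walk u' v') (hp : w'.IsPath) (hu : u' ∈ S) (hv : v' ∈ S)
    (hlen2 : 2 ≤ w'.support.length)
    (hsub : ∀ x ∈ w'.support, x ∈ A ∪ S)
    (hdisj : ∀ k, w'.support.Disjoint (Q k).2.2.support) :
    ∃ (m' : ℕ) (Q' : Fin m' → Σ u v : V, G.Walk u v),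
      IsUpSystem G A S Q' ∧ systemSize G Q < systemSize G Q' := by
  classical
  set Q' : Fin (m+1) → Σ u v : V, G.Walk u v := Fin.snoc Q ⟨u', v', w'⟩ with hQ'def
  have hcast : ∀ k : Fin m, Q' k.castSucc = Q k := by
    intro k; simp [hQ'def]
  have hlastQ : Q' (Fin.last m) = ⟨u', v', w'⟩ := by simp [hQ'def]
  refine ⟨m+1, Q', ⟨?_, ?_, ?_, ?_, ?_⟩, ?_⟩
  · intro k
    induction k using Fin.lastCases with
    | last => rw [hlastQ]; exact hp
    | cast k => rw [hcast]; exact hQ.1 k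
  · intro k
    induction k using Fin.lastCases with
    | last => rw [hlastQ]; exact ⟨hu, hv⟩
    | cast k => rw [hcast]; exact hQ.2.1 k
  · intro k
    induction k using Fin.lastCases with
    | last => rw [hlastQ]; exact hlen2
    | cast k => rw [hcast]; exact hQ.2.2.1 k
  · intro k
    induction k using Fin.lastCases with
    | last => rw [hlastQ]; exact hsub
    | cast k => rw [hcast]; exact hQ.2.2.2.1 k
  · intro k l hkl
    induction k using Fin.lastCases with
    | last =>
      induction l using Fin.lastCases with
      | last => exact absurd rfl hkl
      | cast l => rw [hlastQ, hcast]; exact hdisj l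
    | cast k =>
      induction l using Fin.lastCases with
      | last =>
        rw [hlastQ, hcast]
        intro z hz hz2
        exact hdisj k hz2 hz
      | cast l =>
        rw [hcast, hcast]
        exact hQ.2.2.2.2 k l (fun h => hkl (by rw [h]))
  · show systemSize G Q < ∑ k : Fin (m+1), (Q' k).2.2.support.length
    rw [Fin.sum_univ_castSucc]
    have : ∀ k : Fin m, (Q' k.castSucc).2.2.support.length = (Q k).2.2.support.length := by
      intro k; rw [hcast]
    rw [Finset.sum_congr rfl (fun k _ => this k), hlastQ]
    have h1 : systemSize G Q = ∑ k, (Q k).2.2.support.length := rfl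
    have h2 : ((⟨u', v', w'⟩ : Σ u v : V, G.Walk u v)).2.2.support.length
        = w'.support.length := rfl
    omega

lemma merge_size {G : SimpleGraph V} {A S : Set V} {n : ℕ}
    {Q : Fin (n+1) → Σ u v : V, G.Walk u v} (hQ : IsUpSystem G A S Q)
    (i j : Fin (n+1)) (hij : i ≠ j) {a u' v' : V} (w' : G.Walk u' v')
    (hp : w'.IsPath) (hu : u' ∈ S) (hv : v' ∈ S)
    (hperm : w'.support.Perm (a :: ((Q i).2.2.support ++ (Q j).2.2.support)))
    (ha : ∀ k, a ∉ (Q k).2.2.support) (haA : a ∈ A ∪ S) :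
    ∃ (m' : ℕ) (Q' : Fin m' → Σ u v : V, G.Walk u v),
      IsUpSystem G A S Q' ∧ systemSize G Q < systemSize G Q' := by
  classical
  set Q' : Fin n → Σ u v : V, G.Walk u v :=
    fun k => if h : j.succAbove k = i then ⟨u', v', w'⟩ else Q (j.succAbove k) with hQ'def
  have hQ'new : ∀ k, j.succAbove k = i → Q' k = ⟨u', v', w'⟩ := by
    intro k hk; simp [hQ'def, hk]
  have hQ'old : ∀ k, j.succAbove k ≠ i → Q' k = Q (j.succAbove k) := by
    intro k hk; simp [hQ'def, hk]
  have hlen' : w'.support.length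
      = 1 + ((Q i).2.2.support.length + (Q j).2.2.support.length) := by
    rw [hperm.length_eq]; simp; omega
  have hmem' : ∀ x, x ∈ w'.support ↔
      (x = a ∨ x ∈ (Q i).2.2.support ∨ x ∈ (Q j).2.2.support) := by
    intro x
    rw [hperm.mem_iff]
    simp
  refine ⟨n, Q', ⟨?_, ?_, ?_, ?_, ?_⟩, ?_⟩
  · intro k
    by_cases hk : j.succAbove k = i
    · rw [hQ'new k hk]; exact hp
    · rw [hQ'old k hk]; exact hQ.1 _
  · intro k
    by_cases hk : j.succAbove k = i
    · rw [hQ'new k hk]; exact ⟨hu, hv⟩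
    · rw [hQ'old k hk]; exact hQ.2.1 _
  · intro k
    by_cases hk : j.succAbove k = i
    · rw [hQ'new k hk]
      show 2 ≤ w'.support.length
      have := hQ.2.2.1 i
      omega
    · rw [hQ'old k hk]; exact hQ.2.2.1 _
  · intro k
    by_cases hk : j.succAbove k = i
    · rw [hQ'new k hk]
      intro x hx
      rcases (hmem' x).mp hx with rfl | hx | hx
      · exact haA
      · exact hQ.2.2.2.1 i x hx
      · exact hQ.2.2.2.1 j x hx
    · rw [hQ'old k hk]; exact hQ.2.2.2.1 _
  · intro k l hkl
    have hinj : j.succAbove k ≠ j.succAbove l :=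
      fun h => hkl (Fin.succAbove_right_injective h)
    by_cases hk : j.succAbove k = i
    · have hl : j.succAbove l ≠ i := fun h => hinj (hk.trans h.symm)
      rw [hQ'new k hk, hQ'old l hl]
      intro z hz hz2
      rcases (hmem' z).mp hz with rfl | hz' | hz'
      · exact ha _ hz2
      · exact hQ.2.2.2.2 i _ (fun h => hl h.symm) hz' hz2
      · exact hQ.2.2.2.2 j _ (fun h => (Fin.succAbove_ne j l) h.symm) hz' hz2
    · by_cases hl : j.succAbove l = i
      · rw [hQ'old k hk, hQ'new l hl]
        intro z hz hz2
        rcases (hmem' z).mp hz2 with rfl | hz' | hz'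
        · exact ha _ hz
        · exact hQ.2.2.2.2 _ i hk hz hz'
        · exact hQ.2.2.2.2 _ j (Fin.succAbove_ne j k) hz hz'
      · rw [hQ'old k hk, hQ'old l hl]
        exact hQ.2.2.2.2 _ _ hinj
  · have hfun : ∀ k, (Q' k).2.2.support.length
        = Function.update (fun t => (Q t).2.2.support.length) i w'.support.length (j.succAbove k) := by
      intro k
      by_cases hk : j.succAbove k = i
      · rw [hQ'new k hk, hk, Function.update_self]
      · rw [hQ'old k hk, Function.update_of_ne hk]
    show systemSize G Q < ∑ k, (Q' k).2.2.support.length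
    rw [Finset.sum_congr rfl (fun k _ => hfun k)]
    have hsum := Fin.sum_univ_succAbove
      (Function.update (fun t => (Q t).2.2.support.length) i w'.support.length) j
    have e1 : Function.update (fun t => (Q t).2.2.support.length) i w'.support.length j
        = (Q j).2.2.support.length := Function.update_of_ne (Ne.symm hij) _ _
    have e2 : ∑ t, Function.update (fun t => (Q t).2.2.support.length) i w'.support.length t
        = w'.support.length + ∑ t ∈ Finset.univ \ {i}, (Q t).2.2.support.length :=
      Finset.sum_update_of_mem (Finset.mem_univ i) _ _
    have e3 : ∑ t, (Q t).2.2.support.length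
        = ∑ t ∈ Finset.univ \ {i}, (Q t).2.2.support.length + (Q i).2.2.support.length :=
      Finset.sum_eq_sum_sdiff_singleton_add (Finset.mem_univ i) _
    have e4 : systemSize G Q = ∑ t, (Q t).2.2.support.length := rfl
    omega
lemma walk_filter_bound {G : SimpleGraph V} (P : V → Bool) {u v : V} (w : G.Walk u v)
    (hc : List.Chain' (fun p q => ¬(P p = true ∧ P q = true)) w.support) :
    2 * (w.support.filter P).length + 1 ≤
      w.support.length + (if P u then 1 else 0) + (if P v then 1 else 0) := by
  have hlast : w.support.getLast? = some v := by
    rw [List.getLast?_eq_getLast w.support_ne_nil]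
    exact congrArg some w.getLast_support
  obtain ⟨t, hl⟩ : ∃ t, w.support = u :: t := ⟨w.support.tail, w.support_eq_cons⟩
  rw [hl] at hc hlast ⊢
  have h := filter_chain_bound P t u hc
  have hv : (u :: t).getLast (List.cons_ne_nil u t) = v := by
    rw [List.getLast?_eq_getLast (List.cons_ne_nil u t)] at hlast
    exact Option.some_injective _ hlast
  rw [hv] at h
  exact h

theorem stmt16 [Fintype V] (G : SimpleGraph V) [DecidableRel G.Adj]
    (h2 : 2 ≤ kappa G)
    (A : Set V) (hA : IsFragment G A)
    (m : ℕ) (Q : Fin m → Σ u v : V, G.Walk u v)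
    (hQ : IsUpSystem G A (nbhd G A) Q)
    (hmax : ∀ (m' : ℕ) (Q' : Fin m' → Σ u v : V, G.Walk u v),
      IsUpSystem G A (nbhd G A) Q' → systemSize G Q' ≤ systemSize G Q)
    (hne : (A \ systemVerts G Q).Nonempty)
    (hind : ∀ a ∈ A \ systemVerts G Q, ∀ b ∈ A \ systemVerts G Q, ¬ G.Adj a b) :
    2 * (G.minDegree : ℤ) + m - 2 ≤ ((systemVerts G Q).ncard : ℤ) := by
  classical
  obtain ⟨a, haA, haV⟩ := hne
  set S := nbhd G A with hSdef
  obtain ⟨hpath, hends, hlen, hsubAS, hdis⟩ := hQ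
  have hQ5 : IsUpSystem G A S Q := ⟨hpath, hends, hlen, hsubAS, hdis⟩
  have haV' : ∀ i, a ∉ (Q i).2.2.support := by
    intro i hi
    exact haV (Set.mem_iUnion.mpr ⟨i, hi⟩)
  have hSnA : ∀ x, x ∈ S → x ∉ A := fun x hx => hx.1
  have hnbr : ∀ b, G.Adj a b → b ∈ A ∪ S := by
    intro b hb
    by_cases hbA : b ∈ A
    · exact Or.inl hbA
    · exact Or.inr ⟨hbA, a, haA, hb.symm⟩
  have hnbrV : ∀ b, G.Adj a b → b ∉ systemVerts G Q → b ∈ S := by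
    intro b hb hbV
    rcases hnbr b hb with hbA | hbS
    · exact absurd hb (hind a ⟨haA, haV⟩ b ⟨hbA, hbV⟩)
    · exact hbS
  have contra : ∀ (m' : ℕ) (Q' : Fin m' → Σ u v : V, G.Walk u v),
      IsUpSystem G A S Q' → systemSize G Q < systemSize G Q' → False := by
    intro m' Q' h1 hlt
    have := hmax m' Q' h1
    omega
  set P : V → Bool := fun v => decide (G.Adj a v) with hPdef
  have hP : ∀ v, P v = true ↔ G.Adj a v := by intro v; simp [hPdef]
  -- no two consecutive vertices of a path are neighbors of a
  have F2 : ∀ i x y, s(x,y) ∈ (Q i).2.2.edges → ¬(G.Adj a x ∧ G.Adj a y) := by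
    rintro i x y he ⟨hax, hay⟩
    obtain ⟨w', hw', hperm⟩ := insert_vertex (Q i).2.2 (hpath i) (haV' i) he hax hay
    have hmm : ∀ z, z ∈ w'.support ↔ z = a ∨ z ∈ (Q i).2.2.support := by
      intro z; rw [hperm.mem_iff]; simp
    obtain ⟨m', Q', hsys, hlt⟩ := replace_size hQ5 i w' hw' (hends i).1 (hends i).2
      (by rw [hperm.length_eq]; simp)
      (by intro x hx
          rcases (hmm x).mp hx with rfl | hx
          · exact Or.inl haA
          · exact hsubAS i x hx)
      (by intro k hk z hz hz2
          rcases (hmm z).mp hz with rfl | hz'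
          · exact haV' k hz2
          · exact hdis i k (fun h => hk h.symm) hz' hz2)
      (by rw [hperm.length_eq]; simp)
    exact contra m' Q' hsys hlt
  -- per-path bound
  have hbound : ∀ i, 2 * ((Q i).2.2.support.filter P).length + 1 ≤
      (Q i).2.2.support.length + (if P (Q i).1 then 1 else 0)
        + (if P (Q i).2.1 then 1 else 0) := by
    intro i
    apply walk_filter_bound
    apply chain'_of_edges
    intro x y he hxy
    exact F2 i x y he ⟨(hP x).mp hxy.1, (hP y).mp hxy.2⟩
  -- the neighbors of a outside the system
  set T : Finset V := (G.neighborFinset a).filter (fun b => b ∉ systemVerts G Q) with hTdef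
  have hTmem : ∀ b ∈ T, G.Adj a b ∧ b ∈ S ∧ b ∉ systemVerts G Q := by
    intro b hb
    rw [hTdef, Finset.mem_filter, mem_neighborFinset] at hb
    exact ⟨hb.1, hnbrV b hb.1 hb.2, hb.2⟩
  have hT1 : T.card ≤ 1 := by
    by_contra hc
    push_neg at hc
    obtain ⟨s, hs, t, ht, hst⟩ := Finset.one_lt_card.mp hc
    obtain ⟨hsadj, hsS, hsV⟩ := hTmem s hs
    obtain ⟨htadj, htS, htV⟩ := hTmem t ht
    have has : a ≠ s := fun h => hSnA s hsS (h ▸ haA)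
    have hat : a ≠ t := fun h => hSnA t htS (h ▸ haA)
    set w' : G.Walk s t := Walk.cons hsadj.symm (Walk.cons htadj Walk.nil) with hw'def
    have hsup : w'.support = [s, a, t] := by simp [hw'def]
    obtain ⟨m', Q', hsys, hlt⟩ := add_size hQ5 w'
      (by rw [Walk.isPath_def, hsup]
          simp [List.nodup_cons]
          exact ⟨⟨fun h => has h.symm, hst⟩, hat⟩)
      hsS htS (by rw [hsup]; simp)
      (by rw [hsup]
          intro x hx
          simp only [List.mem_cons, List.not_mem_nil, or_false] at hx
          rcases hx with rfl | rfl | rfl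
          · exact Or.inr hsS
          · exact Or.inl haA
          · exact Or.inr htS)
      (by intro k
          rw [hsup]
          intro z hz hz2
          simp only [List.mem_cons, List.not_mem_nil, or_false] at hz
          rcases hz with rfl | rfl | rfl
          · exact hsV (Set.mem_iUnion.mpr ⟨k, hz2⟩)
          · exact haV' k hz2
          · exact htV (Set.mem_iUnion.mpr ⟨k, hz2⟩))
    exact contra m' Q' hsys hlt
  -- if a is adjacent to an endpoint, then T is empty
  have F3 : ∀ i, (G.Adj a (Q i).1 ∨ G.Adj a (Q i).2.1) → T = ∅ := by
    intro i hi
    rw [Finset.eq_empty_iff_forall_notMem]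
    intro s hs
    obtain ⟨hsadj, hsS, hsV⟩ := hTmem s hs
    have hsnot : ∀ k, s ∉ (Q k).2.2.support := fun k h => hsV (Set.mem_iUnion.mpr ⟨k, h⟩)
    have has : a ≠ s := fun h => hSnA s hsS (h ▸ haA)
    rcases hi with hi | hi
    · obtain ⟨w', hw', hperm⟩ := glue_walks (Walk.nil : G.Walk s s) (Q i).2.2 hsadj.symm hi
        (by simp) ((Q i).2.2.isPath_def.mp (hpath i))
        (by intro z hz hz2; simp at hz; exact hsnot i (hz ▸ hz2))
        (by simp; exact has) (haV' i)
      have hmm : ∀ z, z ∈ w'.support ↔ z = a ∨ z = s ∨ z ∈ (Q i).2.2.support := by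
        intro z; rw [hperm.mem_iff]; simp
      obtain ⟨m', Q', hsys, hlt⟩ := replace_size hQ5 i w' hw' hsS (hends i).2
        (by rw [hperm.length_eq]; simp)
        (by intro x hx
            rcases (hmm x).mp hx with rfl | rfl | hx
            · exact Or.inl haA
            · exact Or.inr hsS
            · exact hsubAS i x hx)
        (by intro k hk z hz hz2
            rcases (hmm z).mp hz with rfl | rfl | hz'
            · exact haV' k hz2
            · exact hsnot k hz2
            · exact hdis i k (fun h => hk h.symm) hz' hz2)
        (by rw [hperm.length_eq]; simp)
      exact contra m' Q' hsys hlt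
    · obtain ⟨w', hw', hperm⟩ := glue_walks (Q i).2.2 (Walk.nil : G.Walk s s) hi.symm hsadj
        ((Q i).2.2.isPath_def.mp (hpath i)) (by simp)
        (by intro z hz hz2; simp at hz2; exact hsnot i (hz2 ▸ hz))
        (haV' i) (by simp; exact has)
      have hmm : ∀ z, z ∈ w'.support ↔ z = a ∨ z = s ∨ z ∈ (Q i).2.2.support := by
        intro z; rw [hperm.mem_iff]; simp; tauto
      obtain ⟨m', Q', hsys, hlt⟩ := replace_size hQ5 i w' hw' (hends i).1 hsS
        (by rw [hperm.length_eq]; simp)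
        (by intro x hx
            rcases (hmm x).mp hx with rfl | rfl | hx
            · exact Or.inl haA
            · exact Or.inr hsS
            · exact hsubAS i x hx)
        (by intro k hk z hz hz2
            rcases (hmm z).mp hz with rfl | rfl | hz'
            · exact haV' k hz2
            · exact hsnot k hz2
            · exact hdis i k (fun h => hk h.symm) hz' hz2)
        (by rw [hperm.length_eq]; simp)
      exact contra m' Q' hsys hlt
  -- a cannot be adjacent to endpoints of two distinct paths
  have F4 : ∀ i j, i ≠ j → (G.Adj a (Q i).1 ∨ G.Adj a (Q i).2.1) →
      (G.Adj a (Q j).1 ∨ G.Adj a (Q j).2.1) → False := by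
    intro i j hij hi hj
    obtain ⟨o1, e1, w1, hperm1, hadj1, ho1⟩ : ∃ (o1 e1 : V) (w1 : G.Walk o1 e1),
        w1.support.Perm (Q i).2.2.support ∧ G.Adj e1 a ∧ o1 ∈ S := by
      rcases hi with hi | hi
      · exact ⟨(Q i).2.1, (Q i).1, (Q i).2.2.reverse,
          by rw [Walk.support_reverse]; exact List.reverse_perm _, hi.symm, (hends i).2⟩
      · exact ⟨(Q i).1, (Q i).2.1, (Q i).2.2, List.Perm.refl _, hi.symm, (hends i).1⟩
    obtain ⟨e2, o2, w2, hperm2, hadj2, ho2⟩ : ∃ (e2 o2 : V) (w2 : G.Walk e2 o2),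
        w2.support.Perm (Q j).2.2.support ∧ G.Adj a e2 ∧ o2 ∈ S := by
      rcases hj with hj | hj
      · exact ⟨(Q j).1, (Q j).2.1, (Q j).2.2, List.Perm.refl _, hj, (hends j).2⟩
      · exact ⟨(Q j).2.1, (Q j).1, (Q j).2.2.reverse,
          by rw [Walk.support_reverse]; exact List.reverse_perm _, hj, (hends j).1⟩
    have hn1 : w1.support.Nodup := hperm1.nodup_iff.mpr ((Q i).2.2.isPath_def.mp (hpath i))
    have hn2 : w2.support.Nodup := hperm2.nodup_iff.mpr ((Q j).2.2.isPath_def.mp (hpath j))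
    have hd12 : w1.support.Disjoint w2.support := by
      intro z hz hz2
      exact hdis i j hij (hperm1.mem_iff.mp hz) (hperm2.mem_iff.mp hz2)
    obtain ⟨w', hw', hperm⟩ := glue_walks w1 w2 hadj1 hadj2 hn1 hn2 hd12
      (fun h => haV' i (hperm1.mem_iff.mp h)) (fun h => haV' j (hperm2.mem_iff.mp h))
    have hperm' : w'.support.Perm (a :: ((Q i).2.2.support ++ (Q j).2.2.support)) :=
      hperm.trans ((hperm1.append hperm2).cons a)
    obtain ⟨n, rfl⟩ : ∃ n, m = n + 1 := ⟨m - 1, (Nat.succ_pred_eq_of_pos i.pos).symm⟩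
    obtain ⟨m', Q', hsys, hlt⟩ := merge_size hQ5 i j hij w' hw' ho1 ho2 hperm' haV' (Or.inl haA)
    exact contra m' Q' hsys hlt
  -- endpoint weights
  set eH : Fin m → ℕ :=
    fun i => (if P (Q i).1 then 1 else 0) + (if P (Q i).2.1 then 1 else 0) with heHdef
  have heH2 : ∀ i, eH i ≤ 2 := by
    intro i; simp only [heHdef]; split_ifs <;> omega
  have heHpos : ∀ i, 1 ≤ eH i → (G.Adj a (Q i).1 ∨ G.Adj a (Q i).2.1) := by
    intro i h
    simp only [heHdef] at h
    by_cases h1 : P (Q i).1 = true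
    · exact Or.inl ((hP _).mp h1)
    by_cases hh2 : P (Q i).2.1 = true
    · exact Or.inr ((hP _).mp hh2)
    rw [if_neg h1, if_neg hh2] at h
    omega
  have hEcases : (∑ i, eH i) ≤ 2 ∧ (1 ≤ ∑ i, eH i → T.card = 0) := by
    by_cases hall : ∀ i, eH i = 0
    · have hz : ∑ i, eH i = 0 := Finset.sum_eq_zero (fun i _ => hall i)
      constructor
      · omega
      · intro h; omega
    · push_neg at hall
      obtain ⟨i₀, hi₀⟩ := hall
      have hi₀' : 1 ≤ eH i₀ := Nat.one_le_iff_ne_zero.mpr hi₀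
      have hrest : ∀ j ∈ Finset.univ, j ≠ i₀ → eH j = 0 := by
        intro j _ hj
        by_contra hj0
        exact F4 i₀ j (fun h => hj h.symm) (heHpos i₀ hi₀')
          (heHpos j (Nat.one_le_iff_ne_zero.mpr hj0))
      have hsum : ∑ i, eH i = eH i₀ :=
        Finset.sum_eq_single i₀ hrest (by simp)
      constructor
      · rw [hsum]; exact heH2 i₀
      · intro _
        rw [F3 i₀ (heHpos i₀ hi₀')]
        simp
  -- degree count
  have hdeg : G.minDegree ≤ T.card + ∑ i, ((Q i).2.2.support.filter P).length := by
    have h1 : G.minDegree ≤ (G.neighborFinset a).card := G.minDegree_le_degree a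
    have hsub : G.neighborFinset a ⊆
        T ∪ Finset.univ.biUnion (fun i => ((Q i).2.2.support.filter P).toFinset) := by
      intro b hb
      have hadj : G.Adj a b := (G.mem_neighborFinset a b).mp hb
      by_cases hbV : b ∈ systemVerts G Q
      · obtain ⟨i, hbi⟩ := Set.mem_iUnion.mp hbV
        refine Finset.mem_union_right _ (Finset.mem_biUnion.mpr ⟨i, Finset.mem_univ i, ?_⟩)
        rw [List.mem_toFinset, List.mem_filter]
        exact ⟨hbi, (hP b).mpr hadj⟩
      · exact Finset.mem_union_left _ (by rw [hTdef, Finset.mem_filter]; exact ⟨hb, hbV⟩)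
    calc G.minDegree ≤ (G.neighborFinset a).card := h1
      _ ≤ (T ∪ Finset.univ.biUnion (fun i => ((Q i).2.2.support.filter P).toFinset)).card :=
          Finset.card_le_card hsub
      _ ≤ T.card + (Finset.univ.biUnion (fun i => ((Q i).2.2.support.filter P).toFinset)).card :=
          Finset.card_union_le _ _
      _ ≤ T.card + ∑ i, ((Q i).2.2.support.filter P).toFinset.card := by
          have := Finset.card_biUnion_le
            (s := (Finset.univ : Finset (Fin m)))
            (t := fun i => ((Q i).2.2.support.filter P).toFinset)
          omega
      _ ≤ T.card + ∑ i, ((Q i).2.2.support.filter P).length := by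
          have := Finset.sum_le_sum
            (fun i (_ : i ∈ (Finset.univ : Finset (Fin m))) =>
              List.toFinset_card_le ((Q i).2.2.support.filter P))
          omega
  -- sum up the per-path bounds
  have hsum : 2 * (∑ i, ((Q i).2.2.support.filter P).length) + m
      ≤ systemSize G Q + ∑ i, eH i := by
    have h := Finset.sum_le_sum (fun i (_ : i ∈ (Finset.univ : Finset (Fin m))) => hbound i)
    calc 2 * (∑ i, ((Q i).2.2.support.filter P).length) + m
        = ∑ i, (2 * ((Q i).2.2.support.filter P).length + 1) := by
          rw [Finset.sum_add_distrib, Finset.mul_sum]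
          simp
      _ ≤ ∑ i, ((Q i).2.2.support.length + (if P (Q i).1 then 1 else 0)
            + (if P (Q i).2.1 then 1 else 0)) := h
      _ = systemSize G Q + ∑ i, eH i := by
          rw [systemSize, ← Finset.sum_add_distrib]
          apply Finset.sum_congr rfl
          intro i _
          simp only [heHdef]
          ring
  -- the size of the vertex set
  have hV : (systemVerts G Q).ncard = systemSize G Q := by
    have hset : systemVerts G Q
        = ↑(Finset.univ.biUnion (fun i => (Q i).2.2.support.toFinset)) := by
      ext v
      simp [systemVerts, Set.mem_iUnion]
    rw [hset, Set.ncard_coe_finset]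
    rw [Finset.card_biUnion]
    · apply Finset.sum_congr rfl
      intro i _
      exact List.toFinset_card_of_nodup ((Q i).2.2.isPath_def.mp (hpath i))
    · intro i _ j _ hij
      rw [Function.onFun, Finset.disjoint_left]
      intro z hz hz2
      rw [List.mem_toFinset] at hz hz2
      exact hdis i j hij hz hz2
  obtain ⟨hE2, hE1⟩ := hEcases
  have hfinal : 2 * G.minDegree + m ≤ systemSize G Q + 2 := by
    by_cases hE : 1 ≤ ∑ i, eH i
    · have hT0 := hE1 hE
      omega
    · have hE0 : ∑ i, eH i = 0 := by omega
      omega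
  rw [hV]
  push_cast
  omega
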